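/- For every λ ∈ ℂ with Re λ > 1.5 and every z ∈ ℂ with |z| < 1, the point B₂ A_λ z = (z+λ)/(2(z+λ)+1) lies in the disc {w : |w - 1/4| < 1/4}, hence in K₁ = {|w| ≤ 1/2}. -/

import Mathlib

/-- For every `λ ∈ ℂ` with `Re λ > 1.5` and every `z ∈ ℂ` with `|z| < 1`,
the point `B₂ A_λ z = (z+λ)/(2(z+λ)+1)` lies in the disc `{w : |w - 1/4| < 1/4}`,
hence in `K₁ = {|w| ≤ 1/2}`. -/
theorem stmt_5 (lam : ℂ) (hlam : 1.5 < lam.re) (z : ℂ) (hz : ‖z‖ < 1) :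
    ‖(z + lam) / (2 * (z + lam) + 1) - 1 / 4‖ < 1 / 4 ∧
    ‖(z + lam) / (2 * (z + lam) + 1)‖ ≤ 1 / 2 := by
  set w : ℂ := z + lam with hwdef
  have hzre : -1 < z.re := by
    have h := lt_of_le_of_lt (Complex.abs_re_le_norm z) hz
    exact (abs_lt.mp h).1
  have hwre : 0 < w.re := by
    simp only [hwdef, Complex.add_re]; linarith
  have hden : (2 * w + 1 : ℂ) ≠ 0 := by
    intro h
    have : (2 * w + 1).re = 0 := by rw [h]; simp
    simp [Complex.add_re, Complex.mul_re] at this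
    linarith
  have habs : ‖2 * w - 1‖ < ‖2 * w + 1‖ := by
    have h1 : Complex.normSq (2 * w - 1) < Complex.normSq (2 * w + 1) := by
      simp [Complex.normSq_apply, Complex.add_re, Complex.sub_re, Complex.mul_re,
        Complex.add_im, Complex.sub_im, Complex.mul_im]
      nlinarith
    have := Real.sqrt_lt_sqrt (Complex.normSq_nonneg _) h1
    simpa [Complex.norm_def] using this
  have hpos : 0 < ‖2 * w + 1‖ := by
    simpa [norm_pos_iff] using hden
  have key : w / (2 * w + 1) - 1 / 4 = (2 * w - 1) / (4 * (2 * w + 1)) := by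
    rw [div_sub_div _ _ hden (by norm_num : (4:ℂ) ≠ 0)]
    ring
  have h1 : ‖w / (2 * w + 1) - 1 / 4‖ < 1 / 4 := by
    rw [key, norm_div, norm_mul]
    have h4 : (0:ℝ) < ‖(4:ℂ)‖ := by norm_num [Complex.norm_ofNat]
    rw [div_lt_iff₀ (mul_pos h4 hpos)]
    have : ‖(4 : ℂ)‖ = 4 := by
      simpa using Complex.norm_ofNat 4
    rw [this]
    nlinarith
  refine ⟨h1, ?_⟩
  calc ‖w / (2 * w + 1)‖
      = ‖w / (2 * w + 1) - 1 / 4 + 1 / 4‖ := by ring_nf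
    _ ≤ ‖w / (2 * w + 1) - 1 / 4‖ + ‖(1 / 4 : ℂ)‖ :=
        norm_add_le _ _
    _ ≤ 1 / 4 + 1 / 4 := by
        have : ‖(1 / 4 : ℂ)‖ = 1 / 4 := by norm_num [norm_div]
        rw [this]; linarith
    _ = 1 / 2 := by norm_num
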